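/- Let E be a complex Banach space and let ρ : ℂ → (E →L[ℂ] E) be analytic at every point of D^× = {z ∈ ℂ : 0 < |z| < 1} and satisfy ρ(z·w) = ρ(z) ∘ ρ(w) for all z, w ∈ D^×. Fix k ∈ ℤ, t ∈ (0,1), x ∈ E and set l_k x := (2πi)⁻¹ ∮_{|z|=t} z^{−k−1} (ρ(z) x) dz. Then for every q ∈ D^× one has ρ(q)(l_k x) = q^k • (l_k x); that is, l_k x lies in the k-th weight space of ρ. -/

import Mathlib

open Complex Metric Set intervalIntegral

/-- If `ρ : ℂ → (E →L[ℂ] E)` is analytic on the punctured unit disc `D^×` and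
multiplicative there, then for `k ∈ ℤ`, `t ∈ (0,1)`, `x ∈ E`, the element
`l_k x = (2πi)⁻¹ ∮_{|z|=t} z^(-k-1) (ρ z x) dz` lies in the `k`-th weight
space: `ρ q (l_k x) = q^k • l_k x` for all `q ∈ D^×`. -/
theorem stmt_7 {E : Type*} [NormedAddCommGroup E] [NormedSpace ℂ E] [CompleteSpace E]
    (ρ : ℂ → E →L[ℂ] E)
    (hρ : ∀ z : ℂ, 0 < ‖z‖ → ‖z‖ < 1 → AnalyticAt ℂ ρ z)
    (hmul : ∀ z w : ℂ, 0 < ‖z‖ → ‖z‖ < 1 →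
      0 < ‖w‖ → ‖w‖ < 1 → ρ (z * w) = (ρ z).comp (ρ w))
    (k : ℤ) (t : ℝ) (ht : t ∈ Set.Ioo (0 : ℝ) 1) (x : E)
    (q : ℂ) (hq0 : 0 < ‖q‖) (hq1 : ‖q‖ < 1) :
    ρ q ((2 * (Real.pi : ℂ) * Complex.I)⁻¹ • ∮ z in C(0, t), z ^ (-k - 1) • ρ z x)
      = q ^ k •
        ((2 * (Real.pi : ℂ) * Complex.I)⁻¹ • ∮ z in C(0, t), z ^ (-k - 1) • ρ z x) := by
  have hq : q ≠ 0 := by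
    intro h; simp [h] at hq0
  set s : ℝ := ‖q‖ * t with hs_def
  have hs0 : 0 < s := mul_pos hq0 ht.1
  have hst : s < t := by
    have := mul_lt_mul_of_pos_right hq1 ht.1
    simpa [hs_def] using this
  -- differentiability of the integrand on the punctured disc
  have hfd : ∀ z : ℂ, 0 < ‖z‖ → ‖z‖ < 1 →
      DifferentiableAt ℂ (fun w => w ^ (-k - 1) • ρ w x) z := by
    intro z h0 h1
    have hz : z ≠ 0 := by
      intro h; simp [h] at h0
    exact (differentiableAt_zpow.mpr (Or.inl hz)).smul
      (((hρ z h0 h1).differentiableAt).clm_apply (differentiableAt_const x))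
  have habs_t : ∀ θ : ℝ, ‖circleMap 0 t θ‖ = t := by
    intro θ; simp [norm_circleMap_zero, abs_of_pos ht.1]
  have habs_s : ∀ θ : ℝ, ‖circleMap 0 s θ‖ = s := by
    intro θ; simp [norm_circleMap_zero, abs_of_pos hs0]
  -- continuity of the t-circle integrand
  have hcont_t : Continuous (fun θ : ℝ =>
      deriv (circleMap 0 t) θ • ((circleMap 0 t θ) ^ (-k - 1) • ρ (circleMap 0 t θ) x)) := by
    rw [continuous_iff_continuousAt]
    intro θ
    apply ContinuousAt.smul
    · have hd : deriv (circleMap 0 t) = fun θ : ℝ => circleMap 0 t θ * Complex.I :=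
        funext fun θ => deriv_circleMap 0 t θ
      rw [hd]
      exact ((continuous_circleMap 0 t).mul continuous_const).continuousAt
    · exact ((hfd _ (by rw [habs_t]; exact ht.1) (by rw [habs_t]; exact ht.2)).continuousAt).comp
        (continuous_circleMap 0 t).continuousAt
  -- step 2: push ρ q inside the integral
  have step2 : ρ q (∮ z in C(0, t), z ^ (-k - 1) • ρ z x)
      = ∫ θ in (0:ℝ)..2 * Real.pi,
          deriv (circleMap 0 t) θ • ((circleMap 0 t θ) ^ (-k - 1) • ρ (q * circleMap 0 t θ) x) := by
    rw [circleIntegral, ← (ρ q).intervalIntegral_comp_comm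
      (hcont_t.intervalIntegrable _ _)]
    apply intervalIntegral.integral_congr
    intro θ _
    simp only [map_smul]
    congr 1
    congr 1
    rw [← ContinuousLinearMap.comp_apply, ← hmul q (circleMap 0 t θ) hq0 hq1
      (by rw [habs_t]; exact ht.1) (by rw [habs_t]; exact ht.2)]
  -- the key substitution identity
  have hkey : ∀ θ : ℝ, circleMap 0 s (θ + q.arg) = q * circleMap 0 t θ := by
    intro θ
    simp only [circleMap_zero]
    conv_rhs => rw [← Complex.norm_mul_exp_arg_mul_I q]
    rw [show ((θ + q.arg : ℝ) : ℂ) = (θ : ℂ) + (q.arg : ℂ) by push_cast; ring,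
      add_mul, Complex.exp_add]
    rw [show (s : ℂ) = (‖q‖ : ℂ) * (t : ℂ) by push_cast [hs_def]; ring]
    ring
  -- step 3: change of variable
  have hper : Function.Periodic (fun θ : ℝ =>
      deriv (circleMap 0 s) θ • ((circleMap 0 s θ) ^ (-k - 1) • ρ (circleMap 0 s θ) x))
      (2 * Real.pi) := by
    intro θ
    simp only [deriv_circleMap]
    rw [periodic_circleMap 0 s θ]
  have hone : q ^ k * (q * q ^ (-k - 1)) = 1 := by
    rw [mul_comm q, ← zpow_add_one₀ hq, ← zpow_add₀ hq]
    norm_num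
  have step3 : (∫ θ in (0:ℝ)..2 * Real.pi,
      deriv (circleMap 0 t) θ • ((circleMap 0 t θ) ^ (-k - 1) • ρ (q * circleMap 0 t θ) x))
      = q ^ k • ∮ z in C(0, s), z ^ (-k - 1) • ρ z x := by
    rw [circleIntegral]
    have shift0 := intervalIntegral.integral_comp_add_right (a := (0:ℝ)) (b := 2 * Real.pi)
      (f := fun θ : ℝ => deriv (circleMap 0 s) θ •
        ((circleMap 0 s θ) ^ (-k - 1) • ρ (circleMap 0 s θ) x)) q.arg
    have shift : (∫ θ in (0:ℝ)..2 * Real.pi, (fun θ : ℝ =>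
        deriv (circleMap 0 s) θ • ((circleMap 0 s θ) ^ (-k - 1) • ρ (circleMap 0 s θ) x)) (θ + q.arg))
        = ∫ θ in (0:ℝ)..2 * Real.pi,
            deriv (circleMap 0 s) θ • ((circleMap 0 s θ) ^ (-k - 1) • ρ (circleMap 0 s θ) x) := by
      rw [shift0]
      have h2 := hper.intervalIntegral_add_eq q.arg 0
      simpa [add_comm, zero_add] using h2
    rw [← shift, ← intervalIntegral.integral_smul]
    apply intervalIntegral.integral_congr
    intro θ _
    simp only [deriv_circleMap, hkey θ, smul_smul]
    congr 1
    rw [mul_zpow]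
    linear_combination (-(circleMap 0 t θ * Complex.I * circleMap 0 t θ ^ (-k - 1))) * hone
  -- step 4: deform the contour from radius s to radius t
  have step4 : (∮ z in C(0, s), z ^ (-k - 1) • ρ z x)
      = ∮ z in C(0, t), z ^ (-k - 1) • ρ z x := by
    refine (Complex.circleIntegral_eq_of_differentiable_on_annulus_off_countable hs0 hst.le
      Set.countable_empty ?_ ?_).symm
    · intro z hz
      simp only [mem_diff, mem_closedBall, mem_ball, Complex.dist_eq, sub_zero, not_lt] at hz
      exact ((hfd z (lt_of_lt_of_le hs0 hz.2) (lt_of_le_of_lt hz.1 ht.2)).continuousAt).continuousWithinAt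
    · intro z hz
      simp only [mem_diff, mem_ball, mem_closedBall, Complex.dist_eq, sub_zero, not_le,
        mem_empty_iff_false, not_false_iff, and_true] at hz
      exact hfd z (hs0.trans hz.2) (hz.1.trans ht.2)
  rw [map_smul, step2, step3, step4, smul_comm]
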